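/- In an initialized quantitative reachability game (G, v₀), if there exists a Nash equilibrium whose cost profile is componentwise ≤ y for some threshold y ∈ (ℕ ∪ {+∞})^Π, then there exists a Nash equilibrium τ whose outcome is a lasso hℓ^ω of length |hℓ| ≤ (|Π|+1)·|V|, with cost profile ≤ y, and with Cost_i(outcome of τ) ≤ |Π|·|V| for every player i visiting his target set along the outcome of τ. -/
import Mathlib


open scoped Classical

structure Arena (V : Type) where
  E : V → V → Prop
  succ : ∀ v, ∃ w, E v w

variable {V P : Type}

/-- An infinite play: consecutive vertices are connected by edges. -/
def IsPlay (A : Arena V) (ρ : ℕ → V) : Prop := ∀ k, A.E (ρ k) (ρ (k + 1))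

/-- Cost: least index of a visit to `F`, or `⊤` if never visited. -/
noncomputable def cost (F : Set V) (ρ : ℕ → V) : ℕ∞ :=
  ⨅ (k : ℕ) (_ : ρ k ∈ F), (k : ℕ∞)

/-- Qualitative gain: `1` if the play visits `F`, else `0`. -/
noncomputable def gain (F : Set V) (ρ : ℕ → V) : ℕ :=
  if ∃ n, ρ n ∈ F then 1 else 0

/-- The set of players whose target set is visited along the play. -/
def visit (F : P → Set V) (ρ : ℕ → V) : Set P := {i | ∃ n, ρ n ∈ F i}

/-- The set of players whose target set is visited within the prefix `ρ₀…ρₖ`. -/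
def visitPrefix (F : P → Set V) (ρ : ℕ → V) (k : ℕ) : Set P := {i | ∃ n ≤ k, ρ n ∈ F i}

/-- A multiplayer reachability game: an arena, an owner for each vertex,
and a target set for each player. -/
structure Game (P V : Type) extends Arena V where
  owner : V → P
  F : P → Set V

/-- A strategy maps (past history, current vertex) to the next vertex. -/
abbrev Strat (V : Type) := List V → V → V

def IsStrategy (A : Arena V) (s : Strat V) : Prop := ∀ p v, A.E v (s p v)

noncomputable def histStep (G : Game P V) (σ : P → Strat V) :
    List V × V → List V × V :=
  fun x => (x.1 ++ [x.2], σ (G.owner x.2) x.1 x.2)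

/-- The unique play from `v0` consistent with the strategy profile `σ`. -/
noncomputable def outcome (G : Game P V) (σ : P → Strat V) (v0 : V) (k : ℕ) : V :=
  ((histStep G σ)^[k] ([], v0)).2

/-- Replace the strategy of player `i` by `s` in the profile `σ`. -/
noncomputable def updProfile (σ : P → Strat V) (i : P) (s : Strat V) : P → Strat V :=
  fun j => if j = i then s else σ j

/-- Nash equilibrium for the quantitative (cost-minimizing) semantics. -/
def IsNE (G : Game P V) (σ : P → Strat V) (v0 : V) : Prop :=
  (∀ i, IsStrategy G.toArena (σ i)) ∧
  ∀ (i : P) (s : Strat V), IsStrategy G.toArena s →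
    cost (G.F i) (outcome G σ v0) ≤ cost (G.F i) (outcome G (updProfile σ i s) v0)

/-- Nash equilibrium for the qualitative (gain-maximizing) semantics. -/
def IsNEqual (G : Game P V) (σ : P → Strat V) (v0 : V) : Prop :=
  (∀ i, IsStrategy G.toArena (σ i)) ∧
  ∀ (i : P) (s : Strat V), IsStrategy G.toArena s →
    gain (G.F i) (outcome G (updProfile σ i s) v0) ≤ gain (G.F i) (outcome G σ v0)

/-- The profile in which player `i` plays `s` and all other players (the
coalition `-i`) jointly play `t`. -/
noncomputable def coalProfile (i : P) (s t : Strat V) : P → Strat V :=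
  fun j => if j = i then s else t

/-- Value of the coalitional zero-sum game `G_i` from `v`: player `i`
minimizes the first hitting time of `F i` against the coalition. -/
noncomputable def val (G : Game P V) (i : P) (v : V) : ℕ∞ :=
  ⨅ s : {s : Strat V // IsStrategy G.toArena s},
    ⨆ t : {t : Strat V // IsStrategy G.toArena t},
      cost (G.F i) (outcome G (coalProfile i s.1 t.1) v)

/-- A positional (memoryless) strategy only depends on the current vertex. -/
def Positional (s : Strat V) : Prop := ∀ p q v, s p v = s q v

/-- An optimal strategy for the minimizer (player `i`) in `G_i`. -/
def OptimalMin (G : Game P V) (i : P) (s : Strat V) : Prop :=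
  IsStrategy G.toArena s ∧
  ∀ (v : V) (t : Strat V), IsStrategy G.toArena t →
    cost (G.F i) (outcome G (coalProfile i s t) v) ≤ val G i v

/-- An optimal strategy for the maximizer (the coalition `-i`) in `G_i`. -/
def OptimalMax (G : Game P V) (i : P) (t : Strat V) : Prop :=
  IsStrategy G.toArena t ∧
  ∀ (v : V) (s : Strat V), IsStrategy G.toArena s →
    val G i v ≤ cost (G.F i) (outcome G (coalProfile i s t) v)

/-- `λ`-consistency of a play. -/
def lambdaConsistent (G : Game P V) (lam : V → ℕ∞) (ρ : ℕ → V) : Prop :=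
  ∀ (i : P) (k : ℕ), G.owner (ρ k) = i → (∀ n ≤ k, ρ n ∉ G.F i) →
    cost (G.F i) (fun j => ρ (k + j)) ≤ lam (ρ k)

/-- A lasso `hℓ^ω` of length `|hℓ| ≤ L`. -/
def IsLasso (ρ : ℕ → V) (L : ℕ) : Prop :=
  ∃ n p, 0 < p ∧ n + p ≤ L ∧ ∀ k, n ≤ k → ρ (k + p) = ρ k

/-- The play obtained by removing the cycle `ρₖ…ρₖ₊ₗ` from `ρ`. -/
def removeCycle (ρ : ℕ → V) (k l : ℕ) : ℕ → V :=
  fun j => if j ≤ k then ρ j else ρ (j + l)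

/-- `ρₖ…ρₖ₊ₗ` is an unnecessary cycle: it is a (nontrivial) cycle inside of
which no new player visits his target set. -/
def UnnecessaryCycle (F : P → Set V) (ρ : ℕ → V) (k l : ℕ) : Prop :=
  0 < l ∧ ρ k = ρ (k + l) ∧ visitPrefix F ρ k = visitPrefix F ρ (k + l)

/-- The set of cost profiles of plays from `v0`. -/
def costProfiles (G : Game P V) (v0 : V) : Set (P → ℕ∞) :=
  {c | ∃ ρ, IsPlay G.toArena ρ ∧ ρ 0 = v0 ∧ c = fun i => cost (G.F i) ρ}

/-- The set of gain profiles of plays from `v0`. -/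
def gainProfiles (G : Game P V) (v0 : V) : Set (P → ℕ) :=
  {c | ∃ ρ, IsPlay G.toArena ρ ∧ ρ 0 = v0 ∧ c = fun i => gain (G.F i) ρ}

/-- Pareto optimality for cost profiles: minimal in the componentwise order. -/
def ParetoMinimal {α : Type} [Preorder α] (S : Set α) (p : α) : Prop :=
  p ∈ S ∧ ∀ q ∈ S, q ≤ p → q = p

/-- Pareto optimality for gain profiles: maximal in the componentwise order. -/
def ParetoMaximal {α : Type} [Preorder α] (S : Set α) (p : α) : Prop :=
  p ∈ S ∧ ∀ q ∈ S, p ≤ q → q = p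

/-- `h ++ [v]` is a history from `v0`: a finite path starting at `v0`
whose current (last) vertex is `v`; `h` is the strict past. -/
def IsHist (A : Arena V) (v0 : V) (h : List V) (v : V) : Prop :=
  (h ++ [v]).head? = some v0 ∧ List.Chain' A.E (h ++ [v])

/-- The strategy `s` shifted by the past history `h` (i.e. `s|h`). -/
noncomputable def shiftStrat (s : Strat V) (h : List V) : Strat V :=
  fun p v => s (h ++ p) v

/-- Gain of a play `ρ` in the subgame after past history `h`:
`1` iff `h·ρ` visits `F`. -/
noncomputable def gainAfter (F : Set V) (h : List V) (ρ : ℕ → V) : ℕ :=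
  if (∃ x ∈ h, x ∈ F) ∨ (∃ n, ρ n ∈ F) then 1 else 0

/-- Subgame perfect equilibrium for qualitative reachability games:
in every subgame after a history from `v0`, no player can strictly
increase his gain by a unilateral deviation. -/
def IsSPEqual (G : Game P V) (σ : P → Strat V) (v0 : V) : Prop :=
  (∀ i, IsStrategy G.toArena (σ i)) ∧
  ∀ (h : List V) (v : V), IsHist G.toArena v0 h v →
    ∀ (i : P) (s : Strat V), IsStrategy G.toArena s →
      gainAfter (G.F i) h
          (outcome G (updProfile (fun j => shiftStrat (σ j) h) i s) v) ≤
        gainAfter (G.F i) h (outcome G (fun j => shiftStrat (σ j) h) v)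

section Stmt7Aux

open List

variable {V P : Type}

private def past (f : ℕ → V) (n : ℕ) : List V := (List.range n).map f

private def seg (f : ℕ → V) (a b : ℕ) : List V := (List.range b).map (fun t => f (a + t))

@[simp] private lemma past_length (f : ℕ → V) (n : ℕ) : (past f n).length = n := by
  simp [past]

@[simp] private lemma past_zero (f : ℕ → V) : past f 0 = [] := rfl

@[simp] private lemma seg_zero (f : ℕ → V) (a : ℕ) : seg f a 0 = [] := rfl

private lemma past_succ (f : ℕ → V) (n : ℕ) : past f (n + 1) = past f n ++ [f n] := by
  simp [past, List.range_succ]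

private lemma seg_succ (f : ℕ → V) (a b : ℕ) :
    seg f a (b + 1) = seg f a b ++ [f (a + b)] := by
  simp [seg, List.range_succ]

private lemma past_add (f : ℕ → V) (a b : ℕ) :
    past f (a + b) = past f a ++ seg f a b := by
  induction b with
  | zero => simp
  | succ b ih =>
    rw [← Nat.add_assoc, past_succ, ih, seg_succ, List.append_assoc]

private lemma past_congr {f g : ℕ → V} {n : ℕ} (h : ∀ j < n, f j = g j) :
    past f n = past g n := by
  induction n with
  | zero => rfl
  | succ n ih =>
    rw [past_succ, past_succ, ih (fun j hj => h j (by omega)), h n (by omega)]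

private lemma past_inj {f g : ℕ → V} {n : ℕ} (h : past f n = past g n) :
    ∀ j < n, f j = g j := by
  induction n with
  | zero => omega
  | succ n ih =>
    rw [past_succ, past_succ] at h
    have := List.append_inj h (by simp)
    intro j hj
    rcases Nat.lt_succ_iff_lt_or_eq.1 hj with hj | hj
    · exact ih this.1 j hj
    · subst hj; simpa using this.2

private lemma past_take (f : ℕ → V) {j n : ℕ} (h : j ≤ n) :
    (past f n).take j = past f j := by
  obtain ⟨b, rfl⟩ := Nat.exists_eq_add_of_le h
  rw [past_add]
  exact List.take_left' (past_length f j)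

private lemma past_drop (f : ℕ → V) {j n : ℕ} (h : j ≤ n) :
    (past f n).drop j = seg f j (n - j) := by
  obtain ⟨b, rfl⟩ := Nat.exists_eq_add_of_le h
  rw [past_add]
  rw [show (j + b - j) = b by omega]
  exact List.drop_left' (past_length f j)

/- cost lemmas -/

private lemma cost_le_of_mem {F : Set V} {ρ : ℕ → V} {k : ℕ} (h : ρ k ∈ F) :
    cost F ρ ≤ (k : ℕ∞) :=
  iInf₂_le k h

private lemma le_cost {F : Set V} {ρ : ℕ → V} {x : ℕ∞}
    (h : ∀ k, ρ k ∈ F → x ≤ (k : ℕ∞)) : x ≤ cost F ρ :=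
  le_iInf₂ h

private lemma cost_le_cost_of {F : Set V} {ρ π : ℕ → V}
    (h : ∀ c, π c ∈ F → cost F ρ ≤ (c : ℕ∞)) : cost F ρ ≤ cost F π :=
  le_cost h

private lemma exists_le_of_cost_le {F : Set V} {ρ : ℕ → V} {c : ℕ}
    (h : cost F ρ ≤ (c : ℕ∞)) : ∃ e ≤ c, ρ e ∈ F := by
  by_contra hc
  push_neg at hc
  have h1 : ((c + 1 : ℕ) : ℕ∞) ≤ cost F ρ := by
    refine le_cost fun k hk => ?_
    have : ¬ k ≤ c := fun hkc => hc k hkc hk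
    exact_mod_cast (by omega : c + 1 ≤ k)
  have h2 : ((c + 1 : ℕ) : ℕ∞) ≤ (c : ℕ∞) := h1.trans h
  rw [Nat.cast_le] at h2
  omega

/- outcome lemmas -/

private lemma hist_spec (G : Game P V) (σ : P → Strat V) (v0 : V) (n : ℕ) :
    (histStep G σ)^[n] ([], v0) = (past (outcome G σ v0) n, outcome G σ v0 n) := by
  induction n with
  | zero => rfl
  | succ n ih =>
    have h2 : outcome G σ v0 (n + 1) = ((histStep G σ)^[n + 1] ([], v0)).2 := rfl
    rw [Function.iterate_succ_apply'] at h2 ⊢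
    rw [ih] at h2 ⊢
    refine Prod.ext ?_ h2.symm
    show past (outcome G σ v0) n ++ [outcome G σ v0 n] = past (outcome G σ v0) (n + 1)
    rw [past_succ]

private lemma outcome_zero (G : Game P V) (σ : P → Strat V) (v0 : V) :
    outcome G σ v0 0 = v0 := rfl

private lemma outcome_succ (G : Game P V) (σ : P → Strat V) (v0 : V) (n : ℕ) :
    outcome G σ v0 (n + 1) =
      σ (G.owner (outcome G σ v0 n)) (past (outcome G σ v0) n) (outcome G σ v0 n) := by
  have h2 : outcome G σ v0 (n + 1) = ((histStep G σ)^[n + 1] ([], v0)).2 := rfl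
  rw [Function.iterate_succ_apply', hist_spec] at h2
  exact h2

private lemma outcome_eq {G : Game P V} {σ : P → Strat V} {v0 : V} {f : ℕ → V}
    (h0 : f 0 = v0)
    (hrec : ∀ m, σ (G.owner (f m)) (past f m) (f m) = f (m + 1)) :
    outcome G σ v0 = f := by
  have key : ∀ n, (histStep G σ)^[n] ([], v0) = (past f n, f n) := by
    intro n
    induction n with
    | zero => simp [h0.symm, past_zero]
    | succ n ih =>
      rw [Function.iterate_succ_apply', ih]
      show (past f n ++ [f n], σ (G.owner (f n)) (past f n) (f n)) = _
      rw [hrec n, past_succ]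
  funext n
  show ((histStep G σ)^[n] ([], v0)).2 = f n
  rw [key n]

private lemma outcome_isPlay {G : Game P V} {σ : P → Strat V} {v0 : V}
    (hσ : ∀ i, IsStrategy G.toArena (σ i)) : IsPlay G.toArena (outcome G σ v0) := by
  intro n
  rw [outcome_succ]
  exact hσ _ _ _



@[simp] private lemma seg_length (f : ℕ → V) (a b : ℕ) : (seg f a b).length = b := by
  simp [seg]

private noncomputable def Wfun (ρ : ℕ → V) (r : ℕ → ℕ) (ρt : ℕ → V) :
    List V → V → List V := fun pl v =>
  if pl = past ρt pl.length ∧ v = ρt pl.length then past ρ (r pl.length)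
  else
    past ρ (r (Nat.findGreatest (fun j => pl.take j = past ρt j) pl.length - 1)) ++
      pl.drop (Nat.findGreatest (fun j => pl.take j = past ρt j) pl.length - 1)

private lemma Wfun_on (ρ : ℕ → V) (r : ℕ → ℕ) (ρt : ℕ → V) (mm : ℕ) :
    Wfun ρ r ρt (past ρt mm) (ρt mm) = past ρ (r mm) := by
  unfold Wfun
  simp

private lemma Wfun_off (ρ : ℕ → V) (r : ℕ → ℕ) (ρt : ℕ → V) (pl : List V) (v : V)
    (h : ¬(pl = past ρt pl.length ∧ v = ρt pl.length)) :
    Wfun ρ r ρt pl v =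
      past ρ (r (Nat.findGreatest (fun j => pl.take j = past ρt j) pl.length - 1)) ++
        pl.drop (Nat.findGreatest (fun j => pl.take j = past ρt j) pl.length - 1) := by
  unfold Wfun
  rw [if_neg h]

private noncomputable def sdev (ρ ρt : ℕ → V) (q m : ℕ) (w : V) (s : Strat V) :
    Strat V := fun pl v =>
  if pl.length < q ∧ pl = past ρ pl.length ∧ v = ρ pl.length then ρ (pl.length + 1)
  else if pl.length = q ∧ pl = past ρ q ∧ v = ρ q then w
  else s (past ρt m ++ pl.drop q) v

private theorem GSL (G : Game P V) (v0 : V) (σ : P → Strat V)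
    (hNE : IsNE G σ v0) (r : ℕ → ℕ)
    (h0 : outcome G σ v0 (r 0) = v0)
    (h2 : ∀ m, outcome G σ v0 (r m + 1) = outcome G σ v0 (r (m + 1)))
    (h3 : ∀ (i : P) (c m : ℕ), m ≤ c →
      cost (G.F i) (outcome G σ v0) ≤ ((r m + (c - m) : ℕ) : ℕ∞) →
      cost (G.F i) (fun t => outcome G σ v0 (r t)) ≤ (c : ℕ∞)) :
    ∃ τ : P → Strat V, IsNE G τ v0 ∧
      outcome G τ v0 = fun t => outcome G σ v0 (r t) := by
  classical
  obtain ⟨hσs, hσne⟩ := hNE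
  set ρ : ℕ → V := outcome G σ v0 with hρdef
  set ρt : ℕ → V := fun t => ρ (r t) with hρtdef
  have hρplay : IsPlay G.toArena ρ := outcome_isPlay hσs
  have hrec : ∀ n, σ (G.owner (ρ n)) (past ρ n) (ρ n) = ρ (n + 1) :=
    fun n => (outcome_succ G σ v0 n).symm
  set τ : P → Strat V := fun j pl v => σ j (Wfun ρ r ρt pl v) v with hτdef
  have hτs : ∀ i, IsStrategy G.toArena (τ i) := fun i pl v => hσs i _ v
  have hρt0 : ρt 0 = v0 := h0
  have houtτ : outcome G τ v0 = ρt := by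
    refine outcome_eq hρt0 (fun m => ?_)
    show σ _ (Wfun ρ r ρt (past ρt m) (ρt m)) (ρt m) = ρt (m + 1)
    rw [Wfun_on]
    show σ (G.owner (ρ (r m))) (past ρ (r m)) (ρ (r m)) = ρ (r (m + 1))
    rw [hrec (r m)]
    exact h2 m
  refine ⟨τ, ⟨hτs, ?_⟩, houtτ⟩
  intro i s hs
  rw [houtτ]
  set π2 : ℕ → V := outcome G (updProfile τ i s) v0 with hπ2def
  have hups : ∀ j, IsStrategy G.toArena (updProfile τ i s j) := by
    intro j
    unfold updProfile
    by_cases hj : j = i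
    · rw [if_pos hj]; exact hs
    · rw [if_neg hj]; exact hτs j
  have hπ2play : IsPlay G.toArena π2 := outcome_isPlay hups
  have hπ2succ : ∀ n, π2 (n + 1) =
      updProfile τ i s (G.owner (π2 n)) (past π2 n) (π2 n) :=
    fun n => outcome_succ G (updProfile τ i s) v0 n
  by_cases hall : ∀ t, π2 t = ρt t
  · rw [show π2 = ρt from funext hall]
  · push_neg at hall
    set d : ℕ := Nat.find hall with hddef
    have hdne : π2 d ≠ ρt d := Nat.find_spec hall
    have hdlt : ∀ t, t < d → π2 t = ρt t := fun t ht => not_not.1 (Nat.find_min hall ht)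
    have hd1 : 1 ≤ d := by
      rcases Nat.eq_zero_or_pos d with h | h
      · exfalso
        apply hdne
        rw [h, hρt0]
        exact outcome_zero G (updProfile τ i s) v0
      · exact h
    set m : ℕ := d - 1 with hmdef
    have hdm : d = m + 1 := by omega
    set q : ℕ := r m with hqdef
    have hπ2m : π2 m = ρ q := hdlt m (by omega)
    set s' : Strat V := sdev ρ ρt q m (π2 d) s with hs'def
    have hs's : IsStrategy G.toArena s' := by
      intro pl v
      rw [hs'def]; unfold sdev
      split_ifs with hb1 hb2
      · rw [hb1.2.2]; exact hρplay pl.length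
      · rw [hb2.2.2, ← hπ2m, hdm]; exact hπ2play m
      · exact hs _ v
    have claim1 : ∀ j, j ≤ q →
        (histStep G (updProfile σ i s'))^[j] ([], v0) = (past ρ j, ρ j) := by
      intro j
      induction j with
      | zero =>
        intro _
        exact Prod.ext (past_zero ρ).symm (outcome_zero G σ v0).symm
      | succ j ih =>
        intro hj
        rw [Function.iterate_succ_apply', ih (by omega)]
        show (past ρ j ++ [ρ j],
            updProfile σ i s' (G.owner (ρ j)) (past ρ j) (ρ j)) = _
        rw [← past_succ]
        refine Prod.ext rfl ?_
        show updProfile σ i s' (G.owner (ρ j)) (past ρ j) (ρ j) = ρ (j + 1)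
        unfold updProfile
        by_cases hj0 : G.owner (ρ j) = i
        · rw [if_pos hj0, hs'def]
          unfold sdev
          rw [if_pos ?_]
          · simp only [past_length]
          · refine ⟨?_, ?_, ?_⟩ <;> simp only [past_length]
            exact (by omega : j < q)
        · rw [if_neg hj0]
          exact hrec j
    have claim3 : ∀ t, (histStep G (updProfile σ i s'))^[q + t] ([], v0)
        = (past ρ q ++ seg π2 m t, π2 (m + t)) := by
      intro t
      induction t with
      | zero => simpa [hπ2m] using claim1 q le_rfl
      | succ t ih =>
        rw [show q + (t + 1) = (q + t) + 1 by omega, Function.iterate_succ_apply', ih]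
        show (past ρ q ++ seg π2 m t ++ [π2 (m + t)],
            updProfile σ i s' (G.owner (π2 (m + t)))
              (past ρ q ++ seg π2 m t) (π2 (m + t))) = _
        refine Prod.ext ?_ ?_
        · show _ = past ρ q ++ seg π2 m (t + 1)
          rw [seg_succ, List.append_assoc]
        · show updProfile σ i s' (G.owner (π2 (m + t)))
              (past ρ q ++ seg π2 m t) (π2 (m + t)) = π2 (m + (t + 1))
          rw [show m + (t + 1) = (m + t) + 1 by omega]
          have hWc : Wfun ρ r ρt (past π2 (m + t)) (π2 (m + t))
              = past ρ q ++ seg π2 m t := by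
            rcases Nat.eq_zero_or_pos t with rfl | ht
            · have hp : past π2 m = past ρt m :=
                past_congr (fun j hj => hdlt j (by omega))
              have hv : π2 m = ρt m := hdlt m (by omega)
              rw [Nat.add_zero, seg_zero, List.append_nil, hp, hv, Wfun_on]
            · have hdmt : d ≤ m + t := by omega
              have hcond : ¬(past π2 (m + t) = past ρt (past π2 (m + t)).length ∧
                  π2 (m + t) = ρt (past π2 (m + t)).length) := by
                rw [past_length]
                rintro ⟨hA, hB⟩
                rcases lt_or_eq_of_le hdmt with hlt | heq
                · exact hdne (past_inj hA d hlt)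
                · exact hdne (heq ▸ hB)
              rw [Wfun_off _ _ _ _ _ hcond]
              have hPd : (past π2 (m + t)).take d = past ρt d := by
                rw [past_take _ hdmt]
                exact past_congr (fun j hj => hdlt j hj)
              have hJ : Nat.findGreatest
                  (fun j => (past π2 (m + t)).take j = past ρt j)
                  (past π2 (m + t)).length = d := by
                rw [past_length]
                refine le_antisymm ?_ (Nat.le_findGreatest (P := fun j => (past π2 (m + t)).take j = past ρt j) hdmt hPd)
                by_contra hgt
                push_neg at hgt
                have hPJ := Nat.findGreatest_spec (P := fun j => (past π2 (m + t)).take j = past ρt j) hdmt hPd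
                beta_reduce at hPJ
                have hJle : Nat.findGreatest
                    (fun j => (past π2 (m + t)).take j = past ρt j) (m + t) ≤ m + t :=
                  Nat.findGreatest_le _
                rw [past_take _ hJle] at hPJ
                exact hdne (past_inj hPJ d hgt)
              rw [hJ, show d - 1 = m from by omega,
                past_drop _ (by omega : m ≤ m + t), show m + t - m = t from by omega]
          have hnew := hπ2succ (m + t)
          unfold updProfile at hnew ⊢
          by_cases hj0 : G.owner (π2 (m + t)) = i
          · rw [if_pos hj0]
            rw [if_pos hj0] at hnew
            rw [hs'def]; unfold sdev
            rcases Nat.eq_zero_or_pos t with rfl | ht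
            · rw [seg_zero, List.append_nil]
              rw [if_neg (fun hcc => absurd (by simpa using hcc.1) (lt_irrefl q))]
              rw [if_pos ⟨past_length _ _, rfl, by rw [Nat.add_zero, hπ2m]⟩]
              rw [Nat.add_zero, ← hdm]
            · rw [if_neg ?_, if_neg ?_]
              · have hdrop : (past ρ q ++ seg π2 m t).drop q = seg π2 m t :=
                  List.drop_left' (past_length _ _)
                rw [hdrop]
                have hpp : past ρt m ++ seg π2 m t = past π2 (m + t) := by
                  rw [past_add]
                  congr 1
                  exact (past_congr (fun j hj => hdlt j (by omega))).symm
                rw [hpp, hnew]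
              · rintro ⟨hc1, -⟩
                rw [List.length_append, past_length, seg_length] at hc1
                omega
              · rintro ⟨hc1, -⟩
                rw [List.length_append, past_length, seg_length] at hc1
                omega
          · rw [if_neg hj0]
            rw [if_neg hj0] at hnew
            rw [hnew]
            show σ _ (past ρ q ++ seg π2 m t) (π2 (m + t))
              = σ _ (Wfun ρ r ρt (past π2 (m + t)) (π2 (m + t))) (π2 (m + t))
            rw [hWc]
    refine cost_le_cost_of (fun c hc => ?_)
    by_cases hcd : c < d
    · exact cost_le_of_mem (by rw [← hdlt c hcd]; exact hc)
    · push_neg at hcd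
      have hmc : m ≤ c := by omega
      have hπc : π2 c = outcome G (updProfile σ i s') v0 (q + (c - m)) := by
        have h4 : outcome G (updProfile σ i s') v0 (q + (c - m))
            = ((histStep G (updProfile σ i s'))^[q + (c - m)] ([], v0)).2 := rfl
        rw [claim3 (c - m)] at h4
        rw [h4, show m + (c - m) = c from by omega]
      have hcostπ : cost (G.F i) (outcome G (updProfile σ i s') v0)
          ≤ ((q + (c - m) : ℕ) : ℕ∞) :=
        cost_le_of_mem (by rw [← hπc]; exact hc)
      exact h3 i c m hmc ((hσne i s' hs's).trans hcostπ)

private lemma removal_core {F : P → Set V} {ρ : ℕ → V} {k l : ℕ} (_hl : 0 < l)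
    (hkl : ρ k = ρ (k + l))
    (hvp : visitPrefix F ρ k = visitPrefix F ρ (k + l))
    (i : P) {x : ℕ} (hx : cost (F i) ρ ≤ (x : ℕ∞)) :
    ∃ e, ρ (if e < k then e else e + l) ∈ F i ∧
      ((e ≤ k ∧ e ≤ x) ∨ (k < e ∧ e + l ≤ x)) := by
  classical
  obtain ⟨c0, hc0x, hc0⟩ := exists_le_of_cost_le hx
  have hex : ∃ nn, ρ nn ∈ F i := ⟨c0, hc0⟩
  have hfx : Nat.find hex ≤ x := (Nat.find_min' hex hc0).trans hc0x
  have havoid : Nat.find hex ≤ k ∨ k + l < Nat.find hex := by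
    by_contra hcon
    push_neg at hcon
    obtain ⟨h1, h2⟩ := hcon
    have hmem : i ∈ visitPrefix F ρ (k + l) := ⟨Nat.find hex, h2, Nat.find_spec hex⟩
    rw [← hvp] at hmem
    obtain ⟨e2, he2, hFe2⟩ := hmem
    have := Nat.find_min' hex hFe2
    omega
  rcases havoid with hle | hgt
  · refine ⟨Nat.find hex, ?_, Or.inl ⟨hle, hfx⟩⟩
    split_ifs with hh
    · exact Nat.find_spec hex
    · have hk : Nat.find hex = k := by omega
      rw [hk, ← hkl, ← hk]
      exact Nat.find_spec hex
  · refine ⟨Nat.find hex - l, ?_, Or.inr ⟨by omega, by omega⟩⟩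
    rw [if_neg (by omega), show Nat.find hex - l + l = Nat.find hex by omega]
    exact Nat.find_spec hex

private lemma find_cycle [Fintype V] [Fintype P] {F : P → Set V} {ρ : ℕ → V} {N : ℕ}
    (hN : Fintype.card P * Fintype.card V < N)
    (hbad : ¬ ∀ i c, ρ c ∈ F i → ∃ e ≤ N - 1, ρ e ∈ F i) :
    ∃ k l, 0 < l ∧ k + l ≤ N - 1 ∧ ρ k = ρ (k + l) ∧
      visitPrefix F ρ k = visitPrefix F ρ (k + l) := by
  classical
  push_neg at hbad
  obtain ⟨i0, c0, hc0, hno⟩ := hbad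
  have hi0 : ∀ j, j < N → i0 ∉ visitPrefix F ρ j := by
    rintro j hj ⟨nn, hnn, hF⟩
    exact hno nn (by omega) hF
  set vp : ℕ → Finset P := fun j => Finset.univ.filter (fun i => i ∈ visitPrefix F ρ j)
    with hvp
  have hvpmono : ∀ j j', j ≤ j' → vp j ⊆ vp j' := by
    intro j j' hjj x hx
    simp only [hvp, Finset.mem_filter] at hx ⊢
    obtain ⟨nn, hnn, hF⟩ := hx.2
    exact ⟨Finset.mem_univ x, nn, hnn.trans hjj, hF⟩
  set T : Finset (Finset P) := (Finset.range N).image vp with hT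
  have hTcard : T.card ≤ Fintype.card P := by
    have h1 : ∀ t ∈ T, t.card ∈ Finset.range (Fintype.card P) := by
      intro t ht
      rw [hT, Finset.mem_image] at ht
      obtain ⟨j, hj, rfl⟩ := ht
      rw [Finset.mem_range]
      have hsub : vp j ⊆ Finset.univ.erase i0 := by
        intro x hx
        rw [Finset.mem_erase]
        refine ⟨?_, Finset.mem_univ x⟩
        rintro rfl
        exact hi0 j (Finset.mem_range.1 hj) (Finset.mem_filter.1 hx).2
      have hcard : (vp j).card ≤ (Finset.univ.erase i0).card := Finset.card_le_card hsub
      rw [Finset.card_erase_of_mem (Finset.mem_univ i0), Finset.card_univ] at hcard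
      have hpos : 0 < Fintype.card P := Fintype.card_pos_iff.2 ⟨i0⟩
      omega
    have h2 : Set.InjOn Finset.card (T : Set (Finset P)) := by
      intro a ha b hb hab
      obtain ⟨j, hj, rfl⟩ := Finset.mem_image.1 (Finset.mem_coe.1 ha)
      obtain ⟨j', hj', rfl⟩ := Finset.mem_image.1 (Finset.mem_coe.1 hb)
      rcases le_total j j' with hle | hle
      · exact Finset.eq_of_subset_of_card_le (hvpmono _ _ hle) (le_of_eq hab.symm)
      · exact (Finset.eq_of_subset_of_card_le (hvpmono _ _ hle) (le_of_eq hab)).symm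
    have := Finset.card_le_card_of_injOn Finset.card h1 h2
    rwa [Finset.card_range] at this
  have hmaps : ∀ j ∈ Finset.range N, (ρ j, vp j) ∈ (Finset.univ : Finset V) ×ˢ T := by
    intro j hj
    rw [Finset.mem_product]
    exact ⟨Finset.mem_univ _, Finset.mem_image_of_mem _ hj⟩
  have hlt : ((Finset.univ : Finset V) ×ˢ T).card < (Finset.range N).card := by
    rw [Finset.card_product, Finset.card_univ, Finset.card_range]
    have h4 : Fintype.card V * T.card ≤ Fintype.card V * Fintype.card P :=
      Nat.mul_le_mul_left _ hTcard
    have h5 : Fintype.card V * Fintype.card P = Fintype.card P * Fintype.card V :=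
      Nat.mul_comm _ _
    omega
  obtain ⟨a, ha, b, hb, hab, heqq⟩ :=
    Finset.exists_ne_map_eq_of_card_lt_of_maps_to hlt hmaps
  have key : ∀ a b : ℕ, a < b → b < N → ρ a = ρ b → vp a = vp b →
      ∃ k l, 0 < l ∧ k + l ≤ N - 1 ∧ ρ k = ρ (k + l) ∧
        visitPrefix F ρ k = visitPrefix F ρ (k + l) := by
    intro a b hlt2 hbN hρab hvpab
    refine ⟨a, b - a, by omega, by omega, ?_, ?_⟩
    · rw [show a + (b - a) = b by omega]; exact hρab
    · rw [show a + (b - a) = b by omega]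
      ext x
      have hxx := Finset.ext_iff.1 hvpab x
      simp only [hvp, Finset.mem_filter, Finset.mem_univ, true_and] at hxx
      exact hxx
  have heq1 : ρ a = ρ b := congrArg Prod.fst heqq
  have heq2 : vp a = vp b := congrArg Prod.snd heqq
  rcases lt_or_gt_of_ne hab with hlt2 | hlt2
  · exact key a b hlt2 (Finset.mem_range.1 hb) heq1 heq2
  · exact key b a hlt2 (Finset.mem_range.1 ha) heq1.symm heq2.symm

private lemma reduce [Fintype V] [Fintype P] (G : Game P V) (v0 : V) (y : P → ℕ∞) :
    ∀ N (σ : P → Strat V), IsNE G σ v0 →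
      (∀ i, cost (G.F i) (outcome G σ v0) ≤ y i) →
      (∀ i c, outcome G σ v0 c ∈ G.F i → ∃ e ≤ N, outcome G σ v0 e ∈ G.F i) →
      ∃ τ, IsNE G τ v0 ∧ (∀ i, cost (G.F i) (outcome G τ v0) ≤ y i) ∧
        (∀ i c, outcome G τ v0 c ∈ G.F i →
          ∃ e ≤ Fintype.card P * Fintype.card V, outcome G τ v0 e ∈ G.F i) := by
  intro N
  induction N using Nat.strong_induction_on with
  | _ N ih =>
    intro σ hNE hy hGood
    by_cases hNP : N ≤ Fintype.card P * Fintype.card V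
    · exact ⟨σ, hNE, hy,
        fun i c hc => (hGood i c hc).imp (fun e he => ⟨he.1.trans hNP, he.2⟩)⟩
    · push_neg at hNP
      by_cases hbad : ∀ i c, outcome G σ v0 c ∈ G.F i →
          ∃ e ≤ N - 1, outcome G σ v0 e ∈ G.F i
      · exact ih (N - 1) (by omega) σ hNE hy hbad
      · set ρ := outcome G σ v0 with hρdef
        obtain ⟨k, l, hl, hklN, hkl, hvp⟩ := find_cycle hNP hbad
        set rr : ℕ → ℕ := fun mm => if mm < k then mm else mm + l with hrr
        have h0' : ρ (rr 0) = v0 := by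
          show ρ (if 0 < k then 0 else 0 + l) = v0
          split_ifs with hh
          · exact outcome_zero G σ v0
          · have hk0 : k = 0 := by omega
            rw [Nat.zero_add, show l = k + l by omega, ← hkl, hk0]
            exact outcome_zero G σ v0
        have h2' : ∀ mm, ρ (rr mm + 1) = ρ (rr (mm + 1)) := by
          intro mm
          show ρ ((if mm < k then mm else mm + l) + 1)
            = ρ (if mm + 1 < k then mm + 1 else mm + 1 + l)
          split_ifs with hA hB hB
          · rfl
          · rw [show mm + 1 = k by omega]
            exact hkl
          · omega
          · rw [show mm + l + 1 = mm + 1 + l by omega]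
        have h3' : ∀ (i : P) (c mm : ℕ), mm ≤ c →
            cost (G.F i) ρ ≤ ((rr mm + (c - mm) : ℕ) : ℕ∞) →
            cost (G.F i) (fun t => ρ (rr t)) ≤ (c : ℕ∞) := by
          intro i c mm hmc hcost
          obtain ⟨e, heF, hcase⟩ := removal_core hl hkl hvp i hcost
          refine (cost_le_of_mem (F := G.F i) (k := e) heF).trans (Nat.cast_le.2 ?_)
          have hrrmm : rr mm = if mm < k then mm else mm + l := rfl
          split_ifs at hrrmm with hh <;> omega
        obtain ⟨τ, hτNE, hτout⟩ := GSL G v0 σ hNE rr h0' h2' h3'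
        refine ih (N - l) (by omega) τ hτNE ?_ ?_
        · intro i
          rw [hτout]
          refine le_trans (cost_le_cost_of fun c hc => ?_) (hy i)
          obtain ⟨e, heF, hcase⟩ := removal_core hl hkl hvp i (cost_le_of_mem hc)
          exact (cost_le_of_mem (F := G.F i) (k := e) heF).trans (Nat.cast_le.2 (by omega))
        · intro i c hc
          rw [hτout] at hc ⊢
          obtain ⟨e1, he1N, hF1⟩ := hGood i (rr c) hc
          obtain ⟨e, heF, hcase⟩ := removal_core hl hkl hvp i
            ((cost_le_of_mem hF1).trans (Nat.cast_le.2 he1N))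
          exact ⟨e, by omega, heF⟩
end Stmt7Aux

/-- if some NE has cost profile ≤ y then some NE with a short
lasso outcome has cost profile ≤ y, and cost ≤ |Π|·|V| for visiting players. -/
theorem stmt7 {V P : Type} [Fintype V] [Fintype P] (G : Game P V) (v0 : V)
    (y : P → ℕ∞)
    (h : ∃ σ : P → Strat V, IsNE G σ v0 ∧
      ∀ i, cost (G.F i) (outcome G σ v0) ≤ y i) :
    ∃ τ : P → Strat V, IsNE G τ v0 ∧
      IsLasso (outcome G τ v0) ((Fintype.card P + 1) * Fintype.card V) ∧
      (∀ i, cost (G.F i) (outcome G τ v0) ≤ y i) ∧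
      ∀ i ∈ visit G.F (outcome G τ v0),
        cost (G.F i) (outcome G τ v0) ≤
          ((Fintype.card P * Fintype.card V : ℕ) : ℕ∞) := by
  classical
  obtain ⟨σ0, hNE0, hy0⟩ := h
  have hGood0' : ∃ N0, ∀ i c, outcome G σ0 v0 c ∈ G.F i →
      ∃ e ≤ N0, outcome G σ0 v0 e ∈ G.F i := by
    refine ⟨Finset.univ.sup (fun i : P =>
      if hh : ∃ cc, outcome G σ0 v0 cc ∈ G.F i then Nat.find hh else 0), ?_⟩
    intro i c hc
    have hex : ∃ cc, outcome G σ0 v0 cc ∈ G.F i := ⟨c, hc⟩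
    refine ⟨Nat.find hex, ?_, Nat.find_spec hex⟩
    have hle := Finset.le_sup (f := fun i : P =>
      if hh : ∃ cc, outcome G σ0 v0 cc ∈ G.F i then Nat.find hh else 0)
      (Finset.mem_univ i)
    beta_reduce at hle
    rwa [dif_pos hex] at hle
  obtain ⟨N0, hGood0⟩ := hGood0'
  obtain ⟨σ1, hNE1, hy1, hGood1⟩ := reduce G v0 y N0 σ0 hNE0 hy0 hGood0
  set ρ := outcome G σ1 v0 with hρdef
  set PV := Fintype.card P * Fintype.card V with hPV
  have hmaps : ∀ j ∈ Finset.Icc PV (PV + Fintype.card V),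
      ρ j ∈ (Finset.univ : Finset V) := fun j _ => Finset.mem_univ _
  have hltc : (Finset.univ : Finset V).card
      < (Finset.Icc PV (PV + Fintype.card V)).card := by
    rw [Finset.card_univ, Nat.card_Icc]
    omega
  obtain ⟨a, ha, b, hb, hab, heqq⟩ :=
    Finset.exists_ne_map_eq_of_card_lt_of_maps_to hltc hmaps
  rw [Finset.mem_Icc] at ha hb
  obtain ⟨n, n', hn1, hn2, hnn', hρn⟩ :
      ∃ n n', PV ≤ n ∧ n' ≤ PV + Fintype.card V ∧ n < n' ∧ ρ n = ρ n' := by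
    rcases lt_or_gt_of_ne hab with hl2 | hl2
    · exact ⟨a, b, ha.1, hb.2, hl2, heqq⟩
    · exact ⟨b, a, hb.1, ha.2, hl2, heqq.symm⟩
  set p := n' - n with hpdef
  have hp0 : 0 < p := by omega
  have hρper : ρ n = ρ (n + p) := by rw [show n + p = n' by omega]; exact hρn
  set rr : ℕ → ℕ := fun mm => if mm < n then mm else n + (mm - n) % p with hrr
  have hrrid : ∀ mm, mm ≤ n → rr mm = mm := by
    intro mm hmm
    show (if mm < n then mm else n + (mm - n) % p) = mm
    split_ifs with hh
    · rfl
    · rw [show mm = n by omega, Nat.sub_self, Nat.zero_mod, Nat.add_zero]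
  have hrrle : ∀ mm, rr mm ≤ mm := by
    intro mm
    show (if mm < n then mm else n + (mm - n) % p) ≤ mm
    split_ifs with hh
    · exact le_rfl
    · have := Nat.mod_le (mm - n) p
      omega
  have h0' : ρ (rr 0) = v0 := by
    rw [hrrid 0 (by omega)]
    exact outcome_zero G σ1 v0
  have h2' : ∀ mm, ρ (rr mm + 1) = ρ (rr (mm + 1)) := by
    intro mm
    show ρ ((if mm < n then mm else n + (mm - n) % p) + 1)
      = ρ (if mm + 1 < n then mm + 1 else n + (mm + 1 - n) % p)
    split_ifs with hA hB hB
    · rfl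
    · rw [show mm + 1 = n by omega, Nat.sub_self, Nat.zero_mod, Nat.add_zero]
    · omega
    · rw [show mm + 1 - n = (mm - n) + 1 by omega]
      rcases Nat.lt_or_ge ((mm - n) % p + 1) p with hc | hc
      · have h1p : 1 % p = 1 := Nat.mod_eq_of_lt (by omega)
        have hmod : ((mm - n) + 1) % p = (mm - n) % p + 1 := by
          rw [Nat.add_mod, h1p, Nat.mod_eq_of_lt hc]
        rw [hmod, ← Nat.add_assoc]
      · have hlt3 : (mm - n) % p < p := Nat.mod_lt _ hp0
        have hap : (mm - n) % p + 1 = p := by omega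
        have hmod : ((mm - n) + 1) % p = 0 := by
          rcases Nat.eq_or_lt_of_le (by omega : 1 ≤ p) with hp1 | hp1
          · rw [← hp1]
            simp [Nat.mod_one]
          · have h1p : 1 % p = 1 := Nat.mod_eq_of_lt hp1
            rw [Nat.add_mod, h1p, hap, Nat.mod_self]
        rw [hmod, Nat.add_zero, show n + (mm - n) % p + 1 = n + p by omega]
        exact hρper.symm
  have hcore : ∀ (i : P) (x : ℕ), cost (G.F i) ρ ≤ (x : ℕ∞) →
      ∃ e, ρ (rr e) ∈ G.F i ∧ e ≤ PV ∧ e ≤ x := by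
    intro i x hx
    obtain ⟨c0, hc0x, hc0⟩ := exists_le_of_cost_le hx
    have hex : ∃ cc, ρ cc ∈ G.F i := ⟨c0, hc0⟩
    obtain ⟨e1, he1, hF1⟩ := hGood1 i c0 hc0
    have hfPV : Nat.find hex ≤ PV := (Nat.find_min' hex hF1).trans he1
    refine ⟨Nat.find hex, ?_, hfPV, (Nat.find_min' hex hc0).trans hc0x⟩
    rw [hrrid _ (by omega)]
    exact Nat.find_spec hex
  have h3' : ∀ (i : P) (c mm : ℕ), mm ≤ c →
      cost (G.F i) ρ ≤ ((rr mm + (c - mm) : ℕ) : ℕ∞) →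
      cost (G.F i) (fun t => ρ (rr t)) ≤ (c : ℕ∞) := by
    intro i c mm hmc hcost
    obtain ⟨e, heF, hePV, hex⟩ := hcore i _ hcost
    refine (cost_le_of_mem (F := G.F i)
      (ρ := fun t => ρ (rr t)) (k := e) heF).trans (Nat.cast_le.2 ?_)
    have := hrrle mm
    omega
  obtain ⟨τ, hτNE, hτout⟩ := GSL G v0 σ1 hNE1 rr h0' h2' h3'
  refine ⟨τ, hτNE, ?_, ?_, ?_⟩
  · rw [hτout]
    refine ⟨n, p, hp0, ?_, ?_⟩
    · have hmul : (Fintype.card P + 1) * Fintype.card V = PV + Fintype.card V := by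
        rw [hPV]; ring
      omega
    · intro kk hkk
      show ρ (rr (kk + p)) = ρ (rr kk)
      have e1 : rr (kk + p) = n + (kk + p - n) % p := by
        show (if kk + p < n then _ else _) = _
        rw [if_neg (by omega)]
      have e2 : rr kk = n + (kk - n) % p := by
        show (if kk < n then _ else _) = _
        rw [if_neg (by omega)]
      rw [e1, e2, show kk + p - n = (kk - n) + p by omega, Nat.add_mod_right]
  · intro i
    rw [hτout]
    refine le_trans (cost_le_cost_of fun c hc => ?_) (hy1 i)
    obtain ⟨e, heF, hePV, hex⟩ := hcore i c (cost_le_of_mem hc)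
    exact (cost_le_of_mem (F := G.F i)
      (ρ := fun t => ρ (rr t)) (k := e) heF).trans (Nat.cast_le.2 hex)
  · intro i hvis
    rw [hτout] at hvis ⊢
    obtain ⟨mm0, hm0⟩ := hvis
    obtain ⟨e, heF, hePV, hex⟩ := hcore i (rr mm0)
      (cost_le_of_mem (F := G.F i) (ρ := ρ) (k := rr mm0) hm0)
    exact (cost_le_of_mem (F := G.F i)
      (ρ := fun t => ρ (rr t)) (k := e) heF).trans (Nat.cast_le.2 hePV)
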